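/- arXiv:math/0403316 — 2 statements merged into one kernel-verified Lean document; each statement's English description precedes it below -/
import Mathlib

section
/- Let f(t) = ∑_{n≥0} (−1)^{n+1} c_n t^{n+1} be the alternating generating series of the Catalan numbers and g(t) = −t + t². Then g(f(t)) = t as formal power series over ℚ. -/
open PowerSeries

/-- Composition `f(g)` of formal power series (intended for `g` with zero constant term). -/
noncomputable def pcomp (f g : PowerSeries ℚ) : PowerSeries ℚ :=
  PowerSeries.mk fun n =>
    ∑ k ∈ Finset.range (n + 1), (PowerSeries.coeff (R := ℚ) k f) * (PowerSeries.coeff (R := ℚ) n (g ^ k))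

/-- `f(t) = ∑_{n≥0} (−1)^{n+1} c_n t^{n+1}`, the alternating generating series of the
Catalan numbers: the coefficient of `t^m` (for `m ≥ 1`) is `(−1)^m c_{m-1}`. -/
noncomputable def fCat : PowerSeries ℚ :=
  PowerSeries.mk fun m => if m = 0 then 0 else (-1 : ℚ) ^ m * (catalan (m - 1) : ℚ)

lemma coeff_fCat (m : ℕ) :
    PowerSeries.coeff (R := ℚ) m fCat = if m = 0 then 0 else (-1 : ℚ) ^ m * (catalan (m - 1) : ℚ) := by
  simp [fCat]

lemma catalan_sum_range (m : ℕ) :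
    ∑ k ∈ Finset.range (m + 1), ((catalan k : ℚ) * (catalan (m - k) : ℚ)) = catalan (m + 1) := by
  rw [catalan_succ' m, Finset.Nat.sum_antidiagonal_eq_sum_range_succ
    (fun x y => catalan x * catalan y) m]
  push_cast
  rfl

lemma coeff_fCat_sq (n : ℕ) :
    PowerSeries.coeff (R := ℚ) n (fCat ^ 2) =
      if n ≤ 1 then 0 else (-1 : ℚ) ^ n * (catalan (n - 1) : ℚ) := by
  rw [sq, PowerSeries.coeff_mul, Finset.Nat.sum_antidiagonal_eq_sum_range_succ
    (fun x y => PowerSeries.coeff (R := ℚ) x fCat * PowerSeries.coeff (R := ℚ) y fCat) n]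
  match n with
  | 0 => simp [coeff_fCat]
  | 1 => norm_num [Finset.sum_range_succ, coeff_fCat]
  | (m + 2) =>
    rw [Finset.sum_range_succ']
    have h0 : PowerSeries.coeff (R := ℚ) 0 fCat = 0 := by simp [coeff_fCat]
    rw [h0]
    rw [Finset.sum_range_succ]
    have h0' : PowerSeries.coeff (R := ℚ) (m + 2 - (m + 1 + 1)) fCat = 0 := by simp [coeff_fCat]
    rw [h0']
    simp only [zero_mul, mul_zero, add_zero]
    have : ∀ k ∈ Finset.range (m + 1),
        PowerSeries.coeff (R := ℚ) (k + 1) fCat * PowerSeries.coeff (R := ℚ) (m + 2 - (k + 1)) fCat =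
        (-1 : ℚ) ^ (m + 2) * ((catalan k : ℚ) * (catalan (m - k) : ℚ)) := by
      intro k hk
      rw [Finset.mem_range] at hk
      have h1 : m + 2 - (k + 1) = (m - k) + 1 := by omega
      rw [coeff_fCat, coeff_fCat, h1]
      simp only [Nat.add_sub_cancel, if_neg (Nat.succ_ne_zero _)]
      rw [show m + 2 = (k + 1) + (m - k + 1) by omega, pow_add]
      ring
    rw [Finset.sum_congr rfl this, ← Finset.mul_sum, catalan_sum_range m]
    simp

theorem neg_fCat_add_sq : -fCat + fCat ^ 2 = (X : PowerSeries ℚ) := by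
  ext n
  rw [map_add, map_neg, coeff_fCat_sq, coeff_fCat, PowerSeries.coeff_X]
  match n with
  | 0 => norm_num
  | 1 => norm_num
  | (m + 2) => simp

/-- With `g(t) = −t + t²`, one has `g(f(t)) = t`. -/
theorem g_comp_fCat : pcomp (-X + X ^ 2 : PowerSeries ℚ) fCat = X := by
  have key : ∀ n, PowerSeries.coeff (R := ℚ) n (pcomp (-X + X ^ 2 : PowerSeries ℚ) fCat)
      = PowerSeries.coeff (R := ℚ) n (-fCat + fCat ^ 2) := by
    intro n
    rw [pcomp, PowerSeries.coeff_mk]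
    have hsummand : ∀ k, (PowerSeries.coeff (R := ℚ) k (-X + X ^ 2 : PowerSeries ℚ)) *
        (PowerSeries.coeff (R := ℚ) n (fCat ^ k)) =
        (if k = 1 then -(PowerSeries.coeff (R := ℚ) n fCat) else 0) +
        (if k = 2 then PowerSeries.coeff (R := ℚ) n (fCat ^ 2) else 0) := by
      intro k
      rw [map_add, map_neg, PowerSeries.coeff_X, PowerSeries.coeff_X_pow]
      by_cases h1 : k = 1
      · subst h1; norm_num
      · by_cases h2 : k = 2
        · subst h2; norm_num
        · simp [h1, h2]
    rw [Finset.sum_congr rfl (fun k _ => hsummand k), Finset.sum_add_distrib,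
      Finset.sum_ite_eq' (Finset.range (n + 1)) 1, Finset.sum_ite_eq' (Finset.range (n + 1)) 2,
      map_add, map_neg]
    simp only [Finset.mem_range]
    by_cases h1 : 1 < n + 1
    · by_cases h2 : 2 < n + 1
      · rw [if_pos h1, if_pos h2]
      · -- n = 1
        have hn : n = 1 := by omega
        subst hn
        rw [if_pos h1, if_neg h2, coeff_fCat_sq]
        norm_num
    · -- n = 0
      have hn : n = 0 := by omega
      subst hn
      rw [if_neg h1, if_neg (by omega : ¬ 2 < 0 + 1), coeff_fCat, coeff_fCat_sq]
      norm_num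
  ext n
  rw [key n, neg_fCat_add_sq]
end

section
/- Let I be a finite set, X ⊆ Y₂ × I² and Z its complement in Y₂ × I². With X_n and Z_n defined as the sets of I-labelled planar binary rooted trees with n vertices all of whose 2-vertex local patterns lie in X (resp. Z), the alternating generating series f(X,t) = ∑_{n≥0} (−1)^{n+1} (#X_n) t^{n+1} and f(Z,t) = ∑_{n≥0} (−1)^{n+1} (#Z_n) t^{n+1} satisfy f(X, f(Z,t)) = t as formal power series over ℚ. -/
/-- Planar binary rooted trees with internal vertices labelled by `I`. -/
inductive PBTree (I : Type) : Type
  | leaf : PBTree I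
  | node : PBTree I → I → PBTree I → PBTree I

/-- The two planar binary trees with 2 vertices: `L` (left comb) and `R` (right comb). -/
inductive Side : Type
  | L : Side
  | R : Side

namespace PBTree

variable {I : Type}

/-- The number of internal vertices of a tree. -/
def vertices : PBTree I → ℕ
  | leaf => 0
  | node l _ r => l.vertices + r.vertices + 1

/-- The set of local patterns of a labelled tree: each pair of adjacent internal vertices,
with labels `i` (lower vertex) and `j` (upper vertex), contributes `(L, i, j)` if the upper
vertex is the left child and `(R, i, j)` if it is the right child. -/
def patterns : PBTree I → Set (Side × I × I)
  | leaf => ∅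
  | node l i r =>
      l.patterns ∪ r.patterns ∪
      (match l with
        | leaf => ∅
        | node _ j _ => {(Side.L, i, j)}) ∪
      (match r with
        | leaf => ∅
        | node _ j _ => {(Side.R, i, j)})

/-- `treeSet X n` is the set `X_n` of labelled trees with `n` vertices all of whose
local patterns lie in `X`. -/
def treeSet (X : Set (Side × I × I)) (n : ℕ) : Set (PBTree I) :=
  {t : PBTree I | t.vertices = n ∧ t.patterns ⊆ X}

end PBTree

open PBTree

/-- The alternating generating series `f(X,t) = ∑_{n≥0} (−1)^{n+1} (#X_n) t^{n+1}` of a set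
`X` of local patterns. -/
noncomputable def genSeries {I : Type} (X : Set (Side × I × I)) : PowerSeries ℚ :=
  PowerSeries.mk fun m =>
    if m = 0 then 0 else (-1 : ℚ) ^ m * ((PBTree.treeSet X (m - 1)).ncard : ℚ)

noncomputable section
open scoped Classical

namespace PBAux

variable {I : Type} [Fintype I]

/-- root-compatibility of a subtree `t` grafted on side `s` below a vertex labelled `i`. -/
def ok (P : Set (Side × I × I)) (s : Side) (i : I) : PBTree I → Prop
  | PBTree.leaf => True
  | PBTree.node _ j _ => (s, i, j) ∈ P

def rootIs (i : I) : PBTree I → Prop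
  | PBTree.leaf => False
  | PBTree.node _ j _ => j = i

/-- all trees with `n` internal vertices. -/
def allF (I : Type) [Fintype I] : ℕ → Finset (PBTree I)
  | 0 => {PBTree.leaf}
  | (n+1) => (Finset.HasAntidiagonal.antidiagonal n).attach.biUnion fun pq =>
      ((allF I pq.1.1) ×ˢ ((Finset.univ : Finset I) ×ˢ allF I pq.1.2)).image
        fun x => PBTree.node x.1 x.2.1 x.2.2
  termination_by n => n
  decreasing_by
  · have := Finset.HasAntidiagonal.mem_antidiagonal.mp pq.2; omega
  · have := Finset.HasAntidiagonal.mem_antidiagonal.mp pq.2; omega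

lemma mem_allF (t : PBTree I) : ∀ n, t ∈ allF I n ↔ t.vertices = n := by
  induction t with
  | leaf =>
    intro n
    cases n with
    | zero => simp [allF, vertices]
    | succ n =>
      simp only [allF, Finset.mem_biUnion, Finset.mem_image, vertices]
      constructor
      · rintro ⟨pq, -, x, -, h⟩; exact absurd h (by simp)
      · omega
  | node l i r ihl ihr =>
    intro n
    cases n with
    | zero => simp [allF, vertices]
    | succ n =>
      simp only [allF, Finset.mem_biUnion, Finset.mem_image, Finset.mem_product, vertices]
      constructor
      · rintro ⟨pq, -, ⟨l', i', r'⟩, ⟨hl, -, hr⟩, h⟩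
        injection h with h1 h2 h3
        subst h1; subst h2; subst h3
        have := Finset.HasAntidiagonal.mem_antidiagonal.mp pq.2
        rw [ihl] at hl; rw [ihr] at hr
        omega
      · intro h
        refine ⟨⟨(l.vertices, r.vertices), Finset.HasAntidiagonal.mem_antidiagonal.mpr (by omega)⟩,
          Finset.mem_attach _ _, (l, i, r), ⟨(ihl _).mpr rfl, Finset.mem_univ _, (ihr _).mpr rfl⟩, rfl⟩

lemma patterns_node (l : PBTree I) (i : I) (r : PBTree I) (P : Set (Side × I × I)) :
    (PBTree.node l i r).patterns ⊆ P ↔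
      l.patterns ⊆ P ∧ r.patterns ⊆ P ∧ ok P Side.L i l ∧ ok P Side.R i r := by
  cases l <;> cases r <;>
    simp only [patterns, ok, Set.union_subset_iff, Set.empty_subset, Set.singleton_subset_iff,
      true_and, and_true] <;> tauto

variable (P : Set (Side × I × I))

def TFin (n : ℕ) (i : I) : Finset (PBTree I) :=
  (allF I n).filter (fun t => t.patterns ⊆ P ∧ rootIs i t)

def DFin (s : Side) (i : I) (n : ℕ) : Finset (PBTree I) :=
  (allF I n).filter (fun t => t.patterns ⊆ P ∧ ok P s i t)

def AFin (n : ℕ) : Finset (PBTree I) :=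
  (allF I n).filter (fun t => t.patterns ⊆ P)

def cF (n : ℕ) (i : I) : ℕ := (TFin P n i).card
def dF (s : Side) (i : I) (n : ℕ) : ℕ := (DFin P s i n).card
def aF (n : ℕ) : ℕ := (AFin P n).card

lemma cF_zero (i : I) : cF P 0 i = 0 := by
  have : TFin P 0 i = ∅ := by
    ext t
    simp only [TFin, Finset.mem_filter, mem_allF, Finset.notMem_empty, iff_false]
    rintro ⟨hv, -, hr⟩
    cases t with
    | leaf => exact hr
    | node l j r => simp [vertices] at hv
  simp [cF, this]

lemma TFin_succ (n : ℕ) (i : I) :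
    TFin P (n+1) i = (Finset.HasAntidiagonal.antidiagonal n).biUnion fun pq =>
      ((DFin P Side.L i pq.1) ×ˢ (DFin P Side.R i pq.2)).image
        fun lr => PBTree.node lr.1 i lr.2 := by
  ext t
  simp only [TFin, Finset.mem_filter, mem_allF, Finset.mem_biUnion, Finset.mem_image,
    Finset.mem_product, DFin, Finset.HasAntidiagonal.mem_antidiagonal]
  constructor
  · rintro ⟨hv, hp, hr⟩
    cases t with
    | leaf => exact absurd hr (by simp [rootIs])
    | node l j r =>
      have hj : j = i := hr
      subst hj
      rw [patterns_node] at hp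
      obtain ⟨h1, h2, h3, h4⟩ := hp
      simp only [vertices] at hv
      exact ⟨(l.vertices, r.vertices), by omega, (l, r),
        ⟨⟨rfl, h1, h3⟩, ⟨rfl, h2, h4⟩⟩, rfl⟩
  · rintro ⟨⟨p, q⟩, hpq, ⟨l, r⟩, ⟨⟨hlv, hlp, hlo⟩, ⟨hrv, hrp, hro⟩⟩, rfl⟩
    dsimp only at hlv hlp hlo hrv hrp hro
    refine ⟨by simp only [vertices]; omega, ?_, rfl⟩
    rw [patterns_node]
    exact ⟨hlp, hrp, hlo, hro⟩

lemma cF_succ (n : ℕ) (i : I) :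
    cF P (n+1) i = ∑ pq ∈ Finset.HasAntidiagonal.antidiagonal n, dF P Side.L i pq.1 * dF P Side.R i pq.2 := by
  rw [cF, TFin_succ]
  rw [Finset.card_biUnion]
  · refine Finset.sum_congr rfl fun pq _ => ?_
    rw [Finset.card_image_of_injective, Finset.card_product]
    · rfl
    · intro a b h; injection h with h1 h2 h3
      exact Prod.ext h1 h3
  · rintro ⟨p, q⟩ hp ⟨p', q'⟩ hq hne
    simp only [Finset.disjoint_left, Finset.mem_image, Finset.mem_product]
    rintro t ⟨⟨l, r⟩, ⟨hl, hr⟩, rfl⟩ ⟨⟨l', r'⟩, ⟨hl', hr'⟩, h⟩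
    injection h with h1 h2 h3
    subst h1; subst h3
    simp only [DFin, Finset.mem_filter, mem_allF] at hl hr hl' hr'
    apply hne
    have := Finset.HasAntidiagonal.mem_antidiagonal.mp hp
    ext <;> simp <;> omega

lemma dF_zero (s : Side) (i : I) : dF P s i 0 = 1 := by
  have : DFin P s i 0 = {PBTree.leaf} := by
    ext t
    simp only [DFin, Finset.mem_filter, mem_allF, Finset.mem_singleton]
    constructor
    · rintro ⟨hv, -⟩
      cases t with
      | leaf => rfl
      | node l j r => simp [vertices] at hv
    · rintro rfl
      exact ⟨rfl, by simp [patterns], trivial⟩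
  simp [dF, this]

lemma dF_succ (s : Side) (i : I) (n : ℕ) :
    dF P s i (n+1) = ∑ j ∈ Finset.univ.filter (fun j => (s, i, j) ∈ P), cF P (n+1) j := by
  have hset : DFin P s i (n+1) =
      (Finset.univ.filter (fun j => (s, i, j) ∈ P)).biUnion (fun j => TFin P (n+1) j) := by
    ext t
    simp only [DFin, TFin, Finset.mem_filter, mem_allF, Finset.mem_biUnion, Finset.mem_univ,
      true_and]
    constructor
    · rintro ⟨hv, hp, ho⟩
      cases t with
      | leaf => simp [vertices] at hv
      | node l j r => exact ⟨j, ho, hv, hp, rfl⟩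
    · rintro ⟨j, hj, hv, hp, hr⟩
      cases t with
      | leaf => exact absurd hr (by simp [rootIs])
      | node l j' r =>
        have : j' = j := hr
        subst this
        exact ⟨hv, hp, hj⟩
  rw [dF, hset, Finset.card_biUnion]
  · rfl
  · intro j _ j' _ hne
    simp only [Finset.disjoint_left, TFin, Finset.mem_filter]
    rintro t ⟨-, -, h1⟩ ⟨-, -, h2⟩
    cases t with
    | leaf => exact h1
    | node l k r => exact hne ((h1 : k = j) ▸ (h2 : k = j') ▸ rfl)

lemma aF_zero : aF P 0 = 1 := by
  have : AFin P 0 = {PBTree.leaf} := by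
    ext t
    simp only [AFin, Finset.mem_filter, mem_allF, Finset.mem_singleton]
    constructor
    · rintro ⟨hv, -⟩
      cases t with
      | leaf => rfl
      | node l j r => simp [vertices] at hv
    · rintro rfl
      exact ⟨rfl, by simp [patterns]⟩
  simp [aF, this]

lemma aF_succ (n : ℕ) : aF P (n+1) = ∑ j : I, cF P (n+1) j := by
  have hset : AFin P (n+1) = Finset.univ.biUnion (fun j => TFin P (n+1) j) := by
    ext t
    simp only [AFin, TFin, Finset.mem_filter, mem_allF, Finset.mem_biUnion, Finset.mem_univ,
      true_and]
    constructor
    · rintro ⟨hv, hp⟩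
      cases t with
      | leaf => simp [vertices] at hv
      | node l j r => exact ⟨j, hv, hp, rfl⟩
    · rintro ⟨j, hv, hp, -⟩
      exact ⟨hv, hp⟩
  rw [aF, hset, Finset.card_biUnion]
  · rfl
  · intro j _ j' _ hne
    simp only [Finset.disjoint_left, TFin, Finset.mem_filter]
    rintro t ⟨-, -, h1⟩ ⟨-, -, h2⟩
    cases t with
    | leaf => exact h1
    | node l k r => exact hne ((h1 : k = j) ▸ (h2 : k = j') ▸ rfl)

lemma treeSet_eq (n : ℕ) : treeSet P n = ↑(AFin P n) := by
  ext t
  simp [treeSet, AFin, mem_allF]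

lemma ncard_treeSet (n : ℕ) : (treeSet P n).ncard = aF P n := by
  rw [treeSet_eq, Set.ncard_coe_finset]; rfl

end PBAux
end

noncomputable section
open scoped Classical

namespace PBAux

open PowerSeries

variable {I : Type} [Fintype I] (P : Set (Side × I × I))

def Cs (i : I) : PowerSeries ℚ := PowerSeries.mk fun n => (cF P n i : ℚ)

def Ds (s : Side) (i : I) : PowerSeries ℚ :=
  1 + ∑ j ∈ Finset.univ.filter (fun j => (s, i, j) ∈ P), Cs P j

def Hs : PowerSeries ℚ := PowerSeries.mk fun m => if m = 0 then 0 else (aF P (m-1) : ℚ)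

lemma constantCoeff_Cs (i : I) : constantCoeff (R := ℚ) (Cs P i) = 0 := by
  rw [← coeff_zero_eq_constantCoeff]
  simp [Cs, cF_zero]

lemma constantCoeff_Hs : constantCoeff (R := ℚ) (Hs P) = 0 := by
  rw [← coeff_zero_eq_constantCoeff]
  simp [Hs]

lemma coeff_Ds (s : Side) (i : I) (p : ℕ) :
    coeff (R := ℚ) p (Ds P s i) = (dF P s i p : ℚ) := by
  cases p with
  | zero =>
    simp [Ds, Cs, cF_zero, dF_zero, coeff_zero_eq_constantCoeff, map_sum]
  | succ p =>
    simp only [Ds, map_add, map_sum, coeff_one, Nat.succ_ne_zero, if_false, Cs, coeff_mk,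
      dF_succ, zero_add, Nat.cast_sum]

lemma Hs_eq : Hs P = X * (1 + ∑ i : I, Cs P i) := by
  ext m
  cases m with
  | zero => simp [Hs, coeff_zero_X_mul]
  | succ m =>
    rw [coeff_succ_X_mul]
    simp only [Hs, coeff_mk, Nat.succ_ne_zero, if_false, Nat.add_sub_cancel, map_add, map_sum,
      coeff_one, Cs]
    cases m with
    | zero => simp [aF_zero, cF_zero]
    | succ m => simp [aF_succ]

lemma Cs_eq (i : I) : Cs P i = X * (Ds P Side.L i * Ds P Side.R i) := by
  ext n
  cases n with
  | zero => simp [Cs, cF_zero, coeff_zero_X_mul]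
  | succ n =>
    rw [coeff_succ_X_mul, coeff_mul]
    simp only [Cs, coeff_mk, coeff_Ds, cF_succ]
    rw [Nat.cast_sum]
    exact Finset.sum_congr rfl fun pq _ => by rw [Nat.cast_mul]

lemma genSeries_eq : genSeries P = rescale (-1) (Hs P) := by
  ext m
  rw [genSeries, coeff_mk, coeff_rescale]
  cases m with
  | zero => simp [Hs]
  | succ m =>
    simp only [Hs, coeff_mk, Nat.succ_ne_zero, if_false, Nat.add_sub_cancel,
      ncard_treeSet, mul_comm]

end PBAux

section PcompLemmas

open PowerSeries

lemma coeff_pcomp (f g : PowerSeries ℚ) (n : ℕ) :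
    coeff (R := ℚ) n (pcomp f g) = ∑ k ∈ Finset.range (n + 1), coeff (R := ℚ) k f * coeff (R := ℚ) n (g ^ k) :=
  coeff_mk _ _

lemma coeff_pow_eq_zero {g : PowerSeries ℚ} (hg : constantCoeff (R := ℚ) g = 0)
    {k m : ℕ} (h : m < k) : coeff (R := ℚ) m (g ^ k) = 0 := by
  have h1 : (X : PowerSeries ℚ) ^ k ∣ g ^ k :=
    pow_dvd_pow_of_dvd (X_dvd_iff.mpr hg) k
  exact X_pow_dvd_iff.mp h1 m h

lemma pcomp_zero (g : PowerSeries ℚ) : pcomp 0 g = 0 := by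
  ext n; simp [coeff_pcomp]

lemma pcomp_add (f1 f2 g : PowerSeries ℚ) :
    pcomp (f1 + f2) g = pcomp f1 g + pcomp f2 g := by
  ext n
  simp only [coeff_pcomp, map_add, add_mul, Finset.sum_add_distrib]

lemma pcomp_one (g : PowerSeries ℚ) : pcomp 1 g = 1 := by
  ext n
  rw [coeff_pcomp, Finset.sum_eq_single 0]
  · simp
  · intro k _ hk; simp [coeff_one, hk]
  · intro h; simp at h

lemma pcomp_X {g : PowerSeries ℚ} (hg : constantCoeff (R := ℚ) g = 0) : pcomp X g = g := by
  ext n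
  rw [coeff_pcomp]
  cases n with
  | zero =>
    simp [coeff_X, coeff_zero_eq_constantCoeff, hg]
  | succ n =>
    rw [Finset.sum_eq_single 1]
    · simp
    · intro k _ hk; simp [coeff_X, hk]
    · intro h
      exact absurd (Finset.mem_range.mpr (by omega)) h

lemma pcomp_mul {g : PowerSeries ℚ} (hg : constantCoeff (R := ℚ) g = 0) (f1 f2 : PowerSeries ℚ) :
    pcomp (f1 * f2) g = pcomp f1 g * pcomp f2 g := by
  ext n
  have hz : ∀ {k m : ℕ}, m < k → coeff (R := ℚ) m (g ^ k) = 0 := fun h => coeff_pow_eq_zero hg h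
  set T : Finset (ℕ × ℕ) := Finset.range (n+1) ×ˢ Finset.range (n+1) with hT
  have key : coeff (R := ℚ) n (pcomp (f1 * f2) g)
      = ∑ ab ∈ T, coeff (R := ℚ) ab.1 f1 * coeff (R := ℚ) ab.2 f2 * coeff (R := ℚ) n (g ^ (ab.1 + ab.2)) := by
    rw [coeff_pcomp]
    have step1 : ∀ k ∈ Finset.range (n+1),
        coeff (R := ℚ) k (f1 * f2) * coeff (R := ℚ) n (g ^ k)
          = ∑ ab ∈ Finset.HasAntidiagonal.antidiagonal k,
              coeff (R := ℚ) ab.1 f1 * coeff (R := ℚ) ab.2 f2 * coeff (R := ℚ) n (g ^ (ab.1 + ab.2)) := by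
      intro k _
      rw [coeff_mul, Finset.sum_mul]
      exact Finset.sum_congr rfl fun ab hab => by
        rw [Finset.HasAntidiagonal.mem_antidiagonal.mp hab]
    rw [Finset.sum_congr rfl step1]
    rw [Finset.sum_sigma']
    rw [← Finset.sum_filter_add_sum_filter_not T (fun ab => ab.1 + ab.2 ≤ n)]
    have hvanish : ∑ ab ∈ T.filter (fun ab => ¬ (ab.1 + ab.2 ≤ n)),
        coeff (R := ℚ) ab.1 f1 * coeff (R := ℚ) ab.2 f2 * coeff (R := ℚ) n (g ^ (ab.1 + ab.2)) = 0 := by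
      apply Finset.sum_eq_zero
      intro ab hab
      rw [Finset.mem_filter] at hab
      have h0 : coeff (R := ℚ) n (g ^ (ab.1 + ab.2)) = 0 := hz (by omega)
      rw [h0, mul_zero]
    rw [hvanish, add_zero]
    apply Finset.sum_bij' (fun x _ => x.2) (fun ab _ => (⟨ab.1 + ab.2, ab⟩ : Σ _ : ℕ, ℕ × ℕ))
    · rintro ⟨k, a, b⟩ hx
      simp only [Finset.mem_sigma, Finset.mem_range, Finset.HasAntidiagonal.mem_antidiagonal] at hx
      dsimp only
      simp only [Finset.mem_filter, hT, Finset.mem_product, Finset.mem_range]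
      omega
    · rintro ⟨a, b⟩ hab
      simp only [Finset.mem_filter, hT, Finset.mem_product, Finset.mem_range] at hab
      exact Finset.mem_sigma.mpr ⟨Finset.mem_range.mpr (show a + b < n + 1 by omega),
        Finset.HasAntidiagonal.mem_antidiagonal.mpr rfl⟩
    · rintro ⟨k, a, b⟩ hx
      simp only [Finset.mem_sigma, Finset.mem_range, Finset.HasAntidiagonal.mem_antidiagonal] at hx
      dsimp only
      simp [hx.2]
    · rintro ⟨a, b⟩ _; rfl
    · rintro ⟨k, a, b⟩ _; rfl
  rw [key]
  rw [coeff_mul]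
  have step2 : ∀ pq ∈ Finset.HasAntidiagonal.antidiagonal n,
      coeff (R := ℚ) pq.1 (pcomp f1 g) * coeff (R := ℚ) pq.2 (pcomp f2 g)
        = ∑ ab ∈ T, coeff (R := ℚ) ab.1 f1 * coeff (R := ℚ) pq.1 (g ^ ab.1)
            * (coeff (R := ℚ) ab.2 f2 * coeff (R := ℚ) pq.2 (g ^ ab.2)) := by
    rintro ⟨p, q⟩ hpq
    rw [Finset.HasAntidiagonal.mem_antidiagonal] at hpq
    rw [coeff_pcomp, coeff_pcomp]
    have e1 : ∑ k ∈ Finset.range (p + 1), coeff (R := ℚ) k f1 * coeff (R := ℚ) p (g ^ k)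
        = ∑ k ∈ Finset.range (n + 1), coeff (R := ℚ) k f1 * coeff (R := ℚ) p (g ^ k) := by
      apply Finset.sum_subset
      · intro x hx; rw [Finset.mem_range] at hx ⊢; omega
      · intro x _ hx
        rw [Finset.mem_range] at hx
        have h0 : coeff (R := ℚ) p (g ^ x) = 0 := hz (by omega)
        rw [h0, mul_zero]
    have e2 : ∑ k ∈ Finset.range (q + 1), coeff (R := ℚ) k f2 * coeff (R := ℚ) q (g ^ k)
        = ∑ k ∈ Finset.range (n + 1), coeff (R := ℚ) k f2 * coeff (R := ℚ) q (g ^ k) := by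
      apply Finset.sum_subset
      · intro x hx; rw [Finset.mem_range] at hx ⊢; omega
      · intro x _ hx
        rw [Finset.mem_range] at hx
        have h0 : coeff (R := ℚ) q (g ^ x) = 0 := hz (by omega)
        rw [h0, mul_zero]
    rw [e1, e2, Finset.sum_mul_sum]
    rw [hT, Finset.sum_product]
  rw [Finset.sum_congr rfl step2, Finset.sum_comm]
  apply Finset.sum_congr rfl
  rintro ⟨a, b⟩ _
  rw [pow_add, coeff_mul, Finset.mul_sum]
  apply Finset.sum_congr rfl
  rintro ⟨p, q⟩ _
  ring

/-- `pcomp · g` as a ring homomorphism, for `g` with zero constant term. -/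
noncomputable def pcompHom {g : PowerSeries ℚ} (hg : constantCoeff (R := ℚ) g = 0) :
    PowerSeries ℚ →+* PowerSeries ℚ where
  toFun f := pcomp f g
  map_one' := pcomp_one g
  map_mul' := pcomp_mul hg
  map_zero' := pcomp_zero g
  map_add' := fun f1 f2 => pcomp_add f1 f2 g

lemma pcomp_rescale (f g : PowerSeries ℚ) :
    pcomp f (rescale (-1) g) = rescale (-1) (pcomp f g) := by
  ext n
  rw [coeff_rescale, coeff_pcomp, coeff_pcomp, Finset.mul_sum]
  apply Finset.sum_congr rfl
  intro k _
  rw [← map_pow, coeff_rescale]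
  ring

end PcompLemmas
end

noncomputable section
open scoped Classical

namespace PBAux

open PowerSeries

variable {I : Type} [Fintype I]

/-- `rescale (-1)` sends `X` to `-X`. -/
lemma rescale_neg_one_X : rescale (-1 : ℚ) X = - X := by
  ext n
  rw [coeff_rescale, map_neg, coeff_X]
  by_cases h : n = 1 <;> simp [h]

def filt (X : Set (Side × I × I)) (s : Side) (i : I) : Finset I :=
  Finset.univ.filter (fun j => (s, i, j) ∈ X)

/-- The sign-twisted series of `X`-trees with given root label. -/
def Cp (X : Set (Side × I × I)) (i : I) : PowerSeries ℚ := -(rescale (-1) (Cs X i))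

def Ks (X Z : Set (Side × I × I)) (i : I) : PowerSeries ℚ := pcomp (Cp X i) (Hs Z)

def PIs (Z : Set (Side × I × I)) : PowerSeries ℚ := 1 + ∑ i : I, Cs Z i

lemma Hs_eq_PIs (Z : Set (Side × I × I)) : Hs Z = X * PIs Z := by
  rw [Hs_eq, PIs]

lemma rescale_Ds (X : Set (Side × I × I)) (s : Side) (i : I) :
    rescale (-1 : ℚ) (Ds X s i) = 1 - ∑ j ∈ filt X s i, Cp X j := by
  rw [Ds, map_add, map_one, map_sum, filt]
  have : ∀ j, rescale (-1 : ℚ) (Cs X j) = -(Cp X j) := by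
    intro j; rw [Cp, neg_neg]
  rw [Finset.sum_congr rfl fun j _ => this j, Finset.sum_neg_distrib, ← sub_eq_add_neg]

lemma Cp_eq (X : Set (Side × I × I)) (i : I) :
    Cp X i = PowerSeries.X * ((1 - ∑ j ∈ filt X Side.L i, Cp X j)
      * (1 - ∑ j ∈ filt X Side.R i, Cp X j)) := by
  have h := congrArg (rescale (-1 : ℚ)) (Cs_eq X i)
  rw [map_mul, map_mul, rescale_neg_one_X, rescale_Ds, rescale_Ds] at h
  rw [Cp, h]
  ring

lemma genSeries_eq_Cp (X : Set (Side × I × I)) :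
    genSeries X = -(PowerSeries.X * (1 - ∑ i : I, Cp X i)) := by
  rw [genSeries_eq, Hs_eq, map_mul, rescale_neg_one_X, map_add, map_one, map_sum]
  have : ∀ j, rescale (-1 : ℚ) (Cs X j) = -(Cp X j) := by
    intro j; rw [Cp, neg_neg]
  rw [Finset.sum_congr rfl fun j _ => this j, Finset.sum_neg_distrib]
  ring

lemma Ks_eq (X Z : Set (Side × I × I)) (i : I) :
    Ks X Z i = Hs Z * ((1 - ∑ j ∈ filt X Side.L i, Ks X Z j)
      * (1 - ∑ j ∈ filt X Side.R i, Ks X Z j)) := by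
  have hg : constantCoeff (R := ℚ) (Hs Z) = 0 := constantCoeff_Hs Z
  have : Ks X Z i = (pcompHom hg) (Cp X i) := rfl
  rw [this, Cp_eq, map_mul, map_mul, map_sub, map_sub, map_one, map_sum, map_sum]
  have hX : (pcompHom hg) PowerSeries.X = Hs Z := pcomp_X hg
  rw [hX]
  rfl

lemma constantCoeff_Cp (X : Set (Side × I × I)) (i : I) :
    constantCoeff (R := ℚ) (Cp X i) = 0 := by
  rw [Cp, map_neg, ← coeff_zero_eq_constantCoeff, coeff_rescale]
  simp [Cs, cF_zero]

lemma constantCoeff_Ks (X Z : Set (Side × I × I)) (i : I) :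
    constantCoeff (R := ℚ) (Ks X Z i) = 0 := by
  rw [← coeff_zero_eq_constantCoeff]
  rw [Ks]
  show coeff (R := ℚ) 0 (pcomp _ _) = 0
  rw [coeff_pcomp, Finset.range_one, Finset.sum_singleton, pow_zero,
    coeff_zero_eq_constantCoeff, constantCoeff_Cp, zero_mul]

lemma Ds_Z (X Z : Set (Side × I × I)) (hZ : Z = Xᶜ) (s : Side) (i : I) :
    Ds Z s i = PIs Z - ∑ j ∈ filt X s i, Cs Z j := by
  have hfilt : Finset.univ.filter (fun j => (s, i, j) ∈ Z)
      = Finset.univ \ filt X s i := by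
    ext j
    simp [filt, hZ]
  rw [Ds, hfilt, Finset.sum_sdiff_eq_sub (Finset.subset_univ (filt X s i)), PIs]
  ring

lemma H_eq_PK (X Z : Set (Side × I × I)) (hZ : Z = Xᶜ) :
    ∀ n (i : I), coeff (R := ℚ) n (Cs Z i) = coeff (R := ℚ) n (PIs Z * Ks X Z i) := by
  intro n
  induction n using Nat.strong_induction_on with
  | _ n ih =>
    intro i
    cases n with
    | zero =>
      rw [coeff_zero_eq_constantCoeff, map_mul, constantCoeff_Cs, constantCoeff_Ks, mul_zero]
    | succ m =>
      have hfac : ∀ (s : Side) (p : ℕ), p ≤ m →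
          coeff (R := ℚ) p (Ds Z s i) = coeff (R := ℚ) p (PIs Z * (1 - ∑ j ∈ filt X s i, Ks X Z j)) := by
        intro s p hp
        rw [Ds_Z X Z hZ s i, mul_sub, mul_one, Finset.mul_sum, map_sub, map_sub,
          map_sum, map_sum]
        congr 1
        exact Finset.sum_congr rfl fun j _ => ih p (by omega) j
      have lhs : coeff (R := ℚ) (m+1) (Cs Z i) = coeff (R := ℚ) m (Ds Z Side.L i * Ds Z Side.R i) := by
        rw [Cs_eq, coeff_succ_X_mul]
      have hrw : PIs Z * Ks X Z i
          = PowerSeries.X * ((PIs Z * (1 - ∑ j ∈ filt X Side.L i, Ks X Z j))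
              * (PIs Z * (1 - ∑ j ∈ filt X Side.R i, Ks X Z j))) := by
        rw [Ks_eq, Hs_eq_PIs]
        ring
      rw [lhs, hrw, coeff_succ_X_mul, coeff_mul, coeff_mul]
      apply Finset.sum_congr rfl
      rintro ⟨p, q⟩ hpq
      rw [Finset.HasAntidiagonal.mem_antidiagonal] at hpq
      rw [hfac Side.L p (by omega), hfac Side.R q (by omega)]

lemma PIK_one (X Z : Set (Side × I × I)) (hZ : Z = Xᶜ) :
    PIs Z * (1 - ∑ i : I, Ks X Z i) = 1 := by
  have hCs : ∀ i, Cs Z i = PIs Z * Ks X Z i := fun i =>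
    PowerSeries.ext fun n => H_eq_PK X Z hZ n i
  rw [mul_sub, mul_one, Finset.mul_sum]
  rw [Finset.sum_congr rfl fun i _ => (hCs i).symm]
  rw [PIs]
  ring

theorem main_result (X Z : Set (Side × I × I)) (hZ : Z = Xᶜ) :
    pcomp (genSeries X) (genSeries Z) = PowerSeries.X := by
  have hg : constantCoeff (R := ℚ) (Hs Z) = 0 := constantCoeff_Hs Z
  have h1 : pcomp (genSeries X) (Hs Z) = -PowerSeries.X := by
    have hgen := genSeries_eq_Cp X
    have : pcomp (genSeries X) (Hs Z) = (pcompHom hg) (genSeries X) := rfl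
    rw [this, hgen, map_neg, map_mul, map_sub, map_one, map_sum]
    have hX : (pcompHom hg) PowerSeries.X = Hs Z := pcomp_X hg
    rw [hX]
    have : ∀ i, (pcompHom hg) (Cp X i) = Ks X Z i := fun _ => rfl
    rw [Finset.sum_congr rfl fun i _ => this i]
    rw [Hs_eq_PIs, mul_assoc, PIK_one X Z hZ, mul_one]
  rw [genSeries_eq Z, pcomp_rescale, h1, map_neg, rescale_neg_one_X, neg_neg]

end PBAux
end

/-- Main theorem: if `Z` is the complement of `X` in `Y₂ × I²`, then the alternating
generating series of `X` and `Z` are inverse to each other for composition: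
`f(X, f(Z,t)) = t`. -/
theorem genSeries_comp_complement {I : Type} [Fintype I]
    (X Z : Set (Side × I × I)) (hZ : Z = Xᶜ) :
    pcomp (genSeries X) (genSeries Z) = PowerSeries.X := by
  exact PBAux.main_result X Z hZ
end
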